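/- arXiv:0901.3230 — 15 statements merged into one kernel-verified Lean document; each statement's English description precedes it below -/
import Mathlib

section
/- If Y is a locally connected topological space, V ⊆ Y is closed, and V' is a connected component of V, then ∂V' = V' ∩ ∂V. -/
theorem frontier_connectedComponentIn_of_closed
    {Y : Type*} [TopologicalSpace Y] [LocallyConnectedSpace Y]
    (V : Set Y) (hV : IsClosed V) (x : Y) (hx : x ∈ V) :
    frontier (connectedComponentIn V x) = connectedComponentIn V x ∩ frontier V := by
  set V' := connectedComponentIn V x with hV'
  have hsub : V' ⊆ V := connectedComponentIn_subset V x
  have hclosed : IsClosed V' := by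
    rw [hV', connectedComponentIn_eq_image hx]
    exact hV.isClosedEmbedding_subtypeVal.isClosedMap _ isClosed_connectedComponent
  have hint : interior V' = V' ∩ interior V := by
    apply Set.Subset.antisymm
    · exact Set.subset_inter interior_subset
        (interior_mono hsub)
    · rintro y ⟨hyV', hyint⟩
      obtain ⟨U, hUn, hUc, hUc2⟩ := locallyConnectedSpace_iff_connected_subsets.mp
        ‹LocallyConnectedSpace Y› y (interior V) (isOpen_interior.mem_nhds hyint)
      have hyU : y ∈ U := mem_of_mem_nhds hUn
      have hsub2 : U ⊆ connectedComponentIn V y :=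
        hUc.subset_connectedComponentIn hyU (hUc2.trans interior_subset)
      rw [← connectedComponentIn_eq hyV', ← hV'] at hsub2
      exact mem_interior_iff_mem_nhds.mpr (Filter.mem_of_superset hUn hsub2)
  rw [hclosed.frontier_eq, hV.frontier_eq, hint]
  ext y
  constructor
  · rintro ⟨h1, h2⟩; exact ⟨h1, hsub h1, fun h => h2 ⟨h1, h⟩⟩
  · rintro ⟨h1, _, h3⟩; exact ⟨h1, fun h => h3 h.2⟩
end

section
/- If Y is a locally connected topological space and {A_i}_{i∈I} is any family of subsets of Y, then the boundary of the union ⋃_i A_i is contained in the closure of the union of the boundaries ⋃_i ∂A_i. -/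
theorem frontier_iUnion_subset_closure_iUnion_frontier
    {Y : Type*} [TopologicalSpace Y] [LocallyConnectedSpace Y]
    {I : Type*} (A : I → Set Y) :
    frontier (⋃ i, A i) ⊆ closure (⋃ i, frontier (A i)) := by
  intro x hx
  by_contra hxc
  -- the complement of the closure is an open neighborhood of x
  have hnhds : (closure (⋃ i, frontier (A i)))ᶜ ∈ nhds x :=
    (isOpen_compl_iff.mpr isClosed_closure).mem_nhds hxc
  obtain ⟨U, ⟨hUopen, hxU, hUconn⟩, hUsub⟩ :=
    (LocallyConnectedSpace.open_connected_basis x).mem_iff.mp hnhds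
  -- U is disjoint from every frontier (A i)
  have hdisj : ∀ i, U ∩ frontier (A i) = ∅ := by
    intro i
    apply Set.eq_empty_of_subset_empty
    rintro y ⟨hyU, hyf⟩
    exact hUsub hyU (subset_closure (Set.mem_iUnion.mpr ⟨i, hyf⟩))
  -- For each i, U ⊆ interior (A i) or U ⊆ (closure (A i))ᶜ
  have key : ∀ i, U ⊆ interior (A i) ∨ U ⊆ (closure (A i))ᶜ := by
    intro i
    apply hUconn.isPreconnected.subset_or_subset isOpen_interior
      (isOpen_compl_iff.mpr isClosed_closure)
    · rw [Set.disjoint_compl_right_iff_subset]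
      exact interior_subset.trans subset_closure
    · intro y hyU
      by_cases hy : y ∈ closure (A i)
      · left
        by_contra hyi
        have : y ∈ frontier (A i) := ⟨hy, hyi⟩
        exact absurd (hdisj i ▸ Set.mem_inter hyU this) (Set.notMem_empty y)
      · exact Or.inr hy
  by_cases hcase : ∃ i, U ⊆ interior (A i)
  · obtain ⟨i, hi⟩ := hcase
    have : x ∈ interior (⋃ i, A i) := by
      rw [mem_interior]
      exact ⟨U, hi.trans ((interior_subset).trans (Set.subset_iUnion A i)), hUopen, hxU⟩
    exact hx.2 this
  · push_neg at hcase
    have hUdisj : ∀ i, U ⊆ (closure (A i))ᶜ := fun i =>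
      (key i).resolve_left (hcase i)
    have : U ∩ (⋃ i, A i) = ∅ := by
      apply Set.eq_empty_of_subset_empty
      rintro y ⟨hyU, hyA⟩
      obtain ⟨i, hyi⟩ := Set.mem_iUnion.mp hyA
      exact hUdisj i hyU (subset_closure hyi)
    have : x ∉ closure (⋃ i, A i) := by
      rw [mem_closure_iff]
      push_neg
      exact ⟨U, hUopen, hxU, this⟩
    exact this hx.1
end

section
/- Let Y be a connected, locally connected topological space, let A ⊆ Y be an open subset such that Y \ A is connected, and let A' be a connected component of A. Then Y \ A' is connected. -/
open Set

/-- For `y ∈ A`, the closure of the connected component of `y` in `A` meets `Aᶜ`. -/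
lemma closure_component_meets_compl
    {Y : Type*} [TopologicalSpace Y] [ConnectedSpace Y] [LocallyConnectedSpace Y]
    {A : Set Y} (hA : IsOpen A) (hAc : Aᶜ.Nonempty) {y : Y} (hy : y ∈ A) :
    (closure (connectedComponentIn A y) ∩ Aᶜ).Nonempty := by
  set C := connectedComponentIn A y with hC
  by_contra h
  rw [not_nonempty_iff_eq_empty, ← disjoint_iff_inter_eq_empty,
    disjoint_compl_right_iff_subset] at h
  -- closure C ⊆ A; show closure C ⊆ C, so C is clopen
  have hCopen : IsOpen C := hA.connectedComponentIn
  have hclosed : closure C ⊆ C := by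
    intro z hz
    have hzA : z ∈ A := h hz
    have hDopen : IsOpen (connectedComponentIn A z) := hA.connectedComponentIn
    have hzD : z ∈ connectedComponentIn A z := mem_connectedComponentIn hzA
    have : ((connectedComponentIn A z) ∩ C).Nonempty := by
      have := mem_closure_iff.1 hz _ hDopen hzD
      exact this
    obtain ⟨w, hwD, hwC⟩ := this
    have h1 : connectedComponentIn A z = connectedComponentIn A w :=
      connectedComponentIn_eq hwD
    have h2 : C = connectedComponentIn A w := connectedComponentIn_eq hwC
    rw [h2, ← h1]; exact hzD
  have hclopen : IsClopen C :=
    ⟨closure_subset_iff_isClosed.1 hclosed, hCopen⟩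
  rcases isClopen_iff.1 hclopen with h0 | h0
  · exact (connectedComponentIn_nonempty_iff.2 hy).ne_empty h0
  · obtain ⟨p, hp⟩ := hAc
    have : p ∈ C := by rw [h0]; trivial
    exact hp (connectedComponentIn_subset A y this)

theorem compl_connectedComponentIn_connected
    {Y : Type*} [TopologicalSpace Y] [ConnectedSpace Y] [LocallyConnectedSpace Y]
    (A : Set Y) (hA : IsOpen A) (hcompl : IsConnected Aᶜ)
    (x : Y) (hx : x ∈ A) :
    IsConnected (connectedComponentIn A x)ᶜ := by
  set A' := connectedComponentIn A x with hA'
  obtain ⟨x0, hx0⟩ := hcompl.nonempty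
  have hA'subA : A' ⊆ A := connectedComponentIn_subset A x
  -- the covering family
  set S : Set (Set Y) := {t | ∃ y ∈ A'ᶜ, t = Aᶜ ∪ connectedComponentIn A y} with hS
  have hx0A' : x0 ∈ A'ᶜ := fun h => hx0 (hA'subA h)
  have hunion : A'ᶜ = ⋃₀ S := by
    apply Subset.antisymm
    · intro z hz
      refine ⟨Aᶜ ∪ connectedComponentIn A z, ⟨z, hz, rfl⟩, ?_⟩
      by_cases hzA : z ∈ A
      · exact Or.inr (mem_connectedComponentIn hzA)
      · exact Or.inl hzA
    · rintro z ⟨t, ⟨y, hy, rfl⟩, hz⟩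
      rcases hz with hz | hz
      · exact fun h => hz (hA'subA h)
      · intro hzA'
        by_cases hyA : y ∈ A
        · have h1 : connectedComponentIn A y = connectedComponentIn A z :=
            connectedComponentIn_eq hz
          have h2 : A' = connectedComponentIn A z := connectedComponentIn_eq hzA'
          refine hy ?_
          show y ∈ connectedComponentIn A x
          rw [show connectedComponentIn A x = connectedComponentIn A z from h2, ← h1]
          exact mem_connectedComponentIn hyA
        · rw [connectedComponentIn_eq_empty hyA] at hz
          exact hz
  rw [hunion]
  refine ⟨⟨x0, ⟨Aᶜ ∪ connectedComponentIn A x0, ⟨x0, hx0A', rfl⟩, Or.inl hx0⟩⟩, ?_⟩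
  apply isPreconnected_sUnion x0 S
  · rintro t ⟨y, hy, rfl⟩; exact Or.inl hx0
  · rintro t ⟨y, hy, rfl⟩
    by_cases hyA : y ∈ A
    · -- Aᶜ ∪ C_y, touching via closure point
      obtain ⟨p, hpc, hpA⟩ := closure_component_meets_compl hA hcompl.nonempty hyA
      have hT : IsPreconnected (connectedComponentIn A y ∪ {p}) := by
        apply (isPreconnected_connectedComponentIn).subset_closure subset_union_left
        exact union_subset subset_closure (by simpa using hpc)
      have := IsPreconnected.union p hpA (Or.inr rfl) hcompl.isPreconnected hT
      have heq : Aᶜ ∪ (connectedComponentIn A y ∪ {p}) = Aᶜ ∪ connectedComponentIn A y := by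
        rw [union_comm (connectedComponentIn A y), ← union_assoc]
        congr 1
        exact union_eq_left.2 (singleton_subset_iff.2 hpA)
      rwa [heq] at this
    · rw [connectedComponentIn_eq_empty hyA, union_empty]
      exact hcompl.isPreconnected
end

section
/- Let X be a topological space, C ⊆ X closed, and f : C → X continuous with f(∂C) ⊆ C. Define C_0 = X, C_{n+1} = {x ∈ C : f(x) ∈ C_n}. Then for every n, f maps the boundary of C_{n+2} relative to C_{n+1} into the boundary of C_{n+1} relative to C_n. -/
/-- The boundary of `A` relative to the subspace `Y` (for `A ⊆ Y`). -/
def relFrontier {X : Type*} [TopologicalSpace X] (Y A : Set X) : Set X :=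
  Y ∩ closure A ∩ closure (Y \ A)

theorem dvt_f_maps_relFrontier
    {X : Type*} [TopologicalSpace X] (C : Set X) (hCne : C.Nonempty)
    (hC : IsClosed C) (f : X → X) (hf : ContinuousOn f C)
    (hbdr : ∀ x ∈ frontier C, f x ∈ C)
    (Cn : ℕ → Set X) (h0 : Cn 0 = Set.univ)
    (hsucc : ∀ n, Cn (n + 1) = {x ∈ C | f x ∈ Cn n}) :
    ∀ n, f '' relFrontier (Cn (n + 1)) (Cn (n + 2)) ⊆
      relFrontier (Cn n) (Cn (n + 1)) := by
  -- Each `Cn n` is closed.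
  have hclosed : ∀ n, IsClosed (Cn n) := by
    intro n
    induction n with
    | zero => rw [h0]; exact isClosed_univ
    | succ n ih =>
      rw [hsucc]
      exact hf.preimage_isClosed_of_isClosed hC ih
  -- The sets are nested.
  have hmono : ∀ n, Cn (n + 1) ⊆ Cn n := by
    intro n
    induction n with
    | zero => rw [h0]; exact Set.subset_univ _
    | succ n ih =>
      intro x hx
      rw [hsucc (n + 1)] at hx
      rw [hsucc n]
      exact ⟨hx.1, ih hx.2⟩
  intro n y hy
  obtain ⟨x, hx, rfl⟩ := hy
  obtain ⟨⟨hx1, hx2⟩, hx3⟩ := hx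
  -- x ∈ Cn (n+2) since Cn (n+2) is closed
  have hx2' : x ∈ Cn (n + 2) := (hclosed (n + 2)).closure_subset hx2
  have hxC : x ∈ C := by
    rw [hsucc] at hx2'; exact hx2'.1
  have hfx : f x ∈ Cn (n + 1) := by
    rw [hsucc] at hx2'; exact hx2'.2
  refine ⟨⟨hmono n hfx, subset_closure hfx⟩, ?_⟩
  -- f maps Cn (n+1) \ Cn (n+2) into Cn n \ Cn (n+1)
  have hmaps : f '' (Cn (n + 1) \ Cn (n + 2)) ⊆ Cn n \ Cn (n + 1) := by
    rintro _ ⟨z, ⟨hz1, hz2⟩, rfl⟩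
    have hzC : z ∈ C := by rw [hsucc] at hz1; exact hz1.1
    have hfz : f z ∈ Cn n := by rw [hsucc] at hz1; exact hz1.2
    refine ⟨hfz, fun hcon => hz2 ?_⟩
    rw [hsucc]; exact ⟨hzC, hcon⟩
  have hsub : Cn (n + 1) \ Cn (n + 2) ⊆ C := by
    intro z hz
    rw [hsucc] at hz; exact hz.1.1
  have hcwa : ContinuousWithinAt f (Cn (n + 1) \ Cn (n + 2)) x :=
    (hf.continuousWithinAt hxC).mono hsub
  exact closure_mono hmaps (hcwa.mem_closure_image hx3)
end

section
/- Let X be a topological space, C ⊆ X closed, f : C → X continuous with f(∂C) ⊆ C, and C_n defined by C_0 = X, C_{n+1} = {x ∈ C : f(x) ∈ C_n}. Then for every n ∈ ℕ, the boundary of C_{n+1} relative to C_n is contained in C_{n+2}. -/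
theorem dvt_relFrontier_subset
    {X : Type*} [TopologicalSpace X] (C : Set X) (hCne : C.Nonempty)
    (hC : IsClosed C) (f : X → X) (hf : ContinuousOn f C)
    (hbdr : ∀ x ∈ frontier C, f x ∈ C)
    (Cn : ℕ → Set X) (h0 : Cn 0 = Set.univ)
    (hsucc : ∀ n, Cn (n + 1) = {x ∈ C | f x ∈ Cn n}) :
    ∀ n, relFrontier (Cn n) (Cn (n + 1)) ⊆ Cn (n + 2) := by
  have hsubC : ∀ n, Cn (n + 1) ⊆ C := by
    intro n x hx
    rw [hsucc] at hx; exact hx.1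
  have hC1 : Cn 1 = C := by
    rw [hsucc, h0]; ext x; simp
  have hanti : ∀ n, Cn (n + 1) ⊆ Cn n := by
    intro n
    induction n with
    | zero => rw [h0]; exact Set.subset_univ _
    | succ k ih =>
      intro x hx
      rw [hsucc] at hx ⊢
      exact ⟨hx.1, ih hx.2⟩
  have hclosed : ∀ n, IsClosed (Cn (n + 1)) := by
    intro n
    induction n with
    | zero => rw [hC1]; exact hC
    | succ k ih =>
      rw [hsucc]
      exact hf.preimage_isClosed_of_isClosed hC ih
  intro n
  induction n with
  | zero =>
    intro x hx
    obtain ⟨⟨hx1, hx2⟩, hx3⟩ := hx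
    rw [hC1] at hx2
    rw [h0, hC1, ← Set.compl_eq_univ_diff] at hx3
    have hxf : x ∈ frontier C := by
      rw [frontier_eq_closure_inter_closure]; exact ⟨hx2, hx3⟩
    have hxC : x ∈ C := hC.frontier_subset hxf
    rw [hsucc, hC1]
    exact ⟨hxC, hbdr x hxf⟩
  | succ k ih =>
    intro x hx
    obtain ⟨⟨hx1, hx2⟩, hx3⟩ := hx
    have hxmem : x ∈ Cn (k + 2) := (hclosed (k + 1)).closure_subset hx2
    have hxC : x ∈ C := hsubC _ hxmem
    have hfx1 : f x ∈ Cn (k + 1) := by rw [hsucc] at hxmem; exact hxmem.2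
    have himg : f '' (Cn (k + 1) \ Cn (k + 2)) ⊆ Cn k \ Cn (k + 1) := by
      rintro _ ⟨y, ⟨hy1, hy2⟩, rfl⟩
      have hyC : y ∈ C := hsubC _ hy1
      refine ⟨?_, ?_⟩
      · rw [hsucc] at hy1; exact hy1.2
      · intro hcon
        exact hy2 (by rw [hsucc]; exact ⟨hyC, hcon⟩)
    have hcwa : ContinuousWithinAt f (Cn (k + 1) \ Cn (k + 2)) x :=
      (hf x hxC).mono fun y hy => hsubC _ hy.1
    have hfx3 : f x ∈ closure (Cn k \ Cn (k + 1)) :=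
      closure_mono himg (hcwa.mem_closure_image hx3)
    have hfx : f x ∈ Cn (k + 2) :=
      ih ⟨⟨hanti _ hfx1, subset_closure hfx1⟩, hfx3⟩
    rw [hsucc]
    exact ⟨hxC, hfx⟩
end

section
/- Let X be a topological space, C ⊆ X closed, f : C → X continuous with f(∂C) ⊆ C. With C_n defined by C_0 = X, C_{n+1} = {x ∈ C : f(x) ∈ C_n}, and A_n = C_n \ C_{n+1}, the set A_n ∪ C_{n+2} is closed in X for every n ∈ ℕ. -/
theorem dvt_An_union_closed
    {X : Type*} [TopologicalSpace X] (C : Set X) (hCne : C.Nonempty)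
    (hC : IsClosed C) (f : X → X) (hf : ContinuousOn f C)
    (hbdr : ∀ x ∈ frontier C, f x ∈ C)
    (Cn : ℕ → Set X) (h0 : Cn 0 = Set.univ)
    (hsucc : ∀ n, Cn (n + 1) = {x ∈ C | f x ∈ Cn n}) :
    ∀ n, IsClosed ((Cn n \ Cn (n + 1)) ∪ Cn (n + 2)) := by
  have hsub : ∀ n, Cn (n + 1) ⊆ C := by
    intro n x hx; rw [hsucc] at hx; exact hx.1
  have hmono : ∀ n, Cn (n + 1) ⊆ Cn n := by
    intro n
    induction n with
    | zero => rw [h0]; exact Set.subset_univ _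
    | succ k ih =>
      intro x hx
      rw [hsucc] at hx ⊢
      exact ⟨hx.1, ih hx.2⟩
  have hclosed : ∀ n, IsClosed (Cn n) := by
    intro n
    induction n with
    | zero => rw [h0]; exact isClosed_univ
    | succ k ih =>
      have he : Cn (k + 1) = C ∩ f ⁻¹' Cn k := by
        rw [hsucc]; rfl
      rw [he]
      exact hf.preimage_isClosed_of_isClosed hC ih
  intro n
  rw [← isOpen_compl_iff]
  induction n with
  | zero =>
    rw [isOpen_iff_forall_mem_open]
    intro x hx
    rw [Set.mem_compl_iff, Set.mem_union, not_or, Set.mem_diff, h0] at hx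
    obtain ⟨hx1, hx2⟩ := hx
    have hx1' : x ∈ Cn 1 := by push_neg at hx1; exact hx1 trivial
    have hxC : x ∈ C := hsub 0 hx1'
    have hfxC : f x ∉ C := by
      intro hfc
      apply hx2
      rw [hsucc]
      exact ⟨hxC, by rw [hsucc, h0]; exact ⟨hfc, trivial⟩⟩
    have hxint : x ∈ interior C := by
      by_contra hni
      exact hfxC (hbdr x (by rw [hC.frontier_eq]; exact ⟨hxC, hni⟩))
    obtain ⟨U, hUopen, hxU, hUsub⟩ := mem_nhdsWithin.1 ((hf x hxC) (hC.isOpen_compl.mem_nhds hfxC))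
    refine ⟨U ∩ interior C, ?_, hUopen.inter isOpen_interior, hxU, hxint⟩
    intro y ⟨hyU, hyint⟩
    have hyC : y ∈ C := interior_subset hyint
    have hfyC : f y ∉ C := hUsub ⟨hyU, hyC⟩
    rw [Set.mem_compl_iff, Set.mem_union, not_or, Set.mem_diff]
    constructor
    · rintro ⟨-, h1⟩
      exact h1 (by rw [hsucc, h0]; exact ⟨hyC, trivial⟩)
    · intro hy2
      rw [hsucc] at hy2
      exact hfyC (hsub 0 hy2.2)
  | succ k ih =>
    rw [isOpen_iff_forall_mem_open]
    intro x hx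
    rw [Set.mem_compl_iff, Set.mem_union, not_or, Set.mem_diff, not_and, not_not] at hx
    obtain ⟨hx1, hx3⟩ := hx
    by_cases hxk1 : x ∈ Cn (k + 1)
    · -- then x ∈ Cn (k+2) \ Cn (k+3)
      have hx2 : x ∈ Cn (k + 2) := hx1 hxk1
      have hxC : x ∈ C := hsub (k + 1) hx2
      have hfx1 : f x ∈ Cn (k + 1) := by rw [hsucc] at hx2; exact hx2.2
      have hfx2 : f x ∉ Cn (k + 2) := by
        intro h
        exact hx3 (by rw [hsucc]; exact ⟨hxC, h⟩)
      have hfxB : f x ∈ ((Cn k \ Cn (k + 1)) ∪ Cn (k + 2))ᶜ := by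
        rw [Set.mem_compl_iff, Set.mem_union, not_or, Set.mem_diff]
        exact ⟨fun h => h.2 hfx1, hfx2⟩
      obtain ⟨U, hUopen, hxU, hUsub⟩ := mem_nhdsWithin.1 ((hf x hxC) (ih.mem_nhds hfxB))
      refine ⟨U, ?_, hUopen, hxU⟩
      intro y hyU
      rw [Set.mem_compl_iff, Set.mem_union, not_or, Set.mem_diff, not_and, not_not]
      by_cases hyk1 : y ∈ Cn (k + 1)
      · have hyC : y ∈ C := hsub k hyk1
        have hfyB := hUsub ⟨hyU, hyC⟩
        simp only [Set.mem_preimage, Set.mem_compl_iff, Set.mem_union, not_or, Set.mem_diff, not_and, not_not] at hfyB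
        obtain ⟨hfy1, hfy2⟩ := hfyB
        have hfyk : f y ∈ Cn k := by rw [hsucc] at hyk1; exact hyk1.2
        have hy2 : y ∈ Cn (k + 2) := by rw [hsucc]; exact ⟨hyC, hfy1 hfyk⟩
        refine ⟨fun _ => hy2, fun h => ?_⟩
        rw [hsucc] at h
        exact hfy2 h.2
      · exact ⟨fun h => absurd h hyk1, fun h => absurd (hmono (k+1) (hmono (k+2) h)) hyk1⟩
    · refine ⟨(Cn (k + 1))ᶜ, ?_, (hclosed (k + 1)).isOpen_compl, hxk1⟩
      intro y hy
      rw [Set.mem_compl_iff, Set.mem_union, not_or, Set.mem_diff, not_and]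
      exact ⟨fun h => absurd h hy, fun h => absurd (hmono (k+1) (hmono (k+2) h)) hy⟩
end

section
/- Let X be a connected topological space, C ⊆ X a nonempty proper closed subset, and f : C → X continuous with f(x) ∈ C for every x ∈ ∂C. Then there exists an orbit of length 3: points x_0, x_1, x_2, x_3 with x_{i} = f(x_{i-1}) and x_{i-1} ∈ C for i = 1, 2, 3. -/
theorem dvt_orbit_three
    {X : Type*} [TopologicalSpace X] [ConnectedSpace X]
    (C : Set X) (hCne : C.Nonempty) (hCproper : C ≠ Set.univ)
    (hC : IsClosed C) (f : X → X) (hf : ContinuousOn f C)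
    (hbdr : ∀ x ∈ frontier C, f x ∈ C) :
    ∃ x₀, x₀ ∈ C ∧ f x₀ ∈ C ∧ f (f x₀) ∈ C := by
  by_contra h
  push_neg at h
  set E : Set X := {x | x ∈ C ∧ f x ∉ C} with hEdef
  have hEC : E ⊆ C := fun x hx => hx.1
  have hEint : E ⊆ interior C := by
    intro x hx
    by_contra hxint
    have hfr : x ∈ frontier C := by
      rw [hC.frontier_eq]
      exact ⟨hx.1, hxint⟩
    exact hx.2 (hbdr x hfr)
  have hEopen : IsOpen E := by
    rw [isOpen_iff_mem_nhds]
    intro x hx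
    have h1 : C ∈ nhds x := mem_interior_iff_mem_nhds.1 (hEint hx)
    have h2 : ContinuousAt f x := (hf x hx.1).continuousAt h1
    have h3 : f ⁻¹' Cᶜ ∈ nhds x := h2 (hC.isOpen_compl.mem_nhds hx.2)
    filter_upwards [h1, h3] with y hy1 hy2
    exact ⟨hy1, hy2⟩
  have hEclosed : IsClosed E := by
    rw [← closure_subset_iff_isClosed]
    intro x hx
    have hxC : x ∈ C := hC.closure_subset_iff.2 hEC hx
    by_contra hxE
    have hfxC : f x ∈ C := by
      by_contra hfx
      exact hxE ⟨hxC, hfx⟩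
    have hcl : f x ∈ closure (f '' E) := ((hf x hxC).mono hEC).mem_closure_image hx
    have himg : f '' E ⊆ Cᶜ := by
      rintro _ ⟨y, hy, rfl⟩
      exact hy.2
    have hfront : f x ∈ frontier C := by
      refine ⟨subset_closure hfxC, ?_⟩
      simpa [closure_compl] using closure_mono himg hcl
    exact h x hxC hfxC (hbdr _ hfront)
  have hEempty : E = ∅ := by
    rcases isClopen_iff.1 ⟨hEclosed, hEopen⟩ with h0 | h1
    · exact h0
    · exact absurd (Set.eq_univ_of_univ_subset (h1 ▸ hEC)) hCproper
  obtain ⟨x₀, hx₀⟩ := hCne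
  have h1 : f x₀ ∈ C := by
    by_contra hfx
    exact absurd (hEempty ▸ (⟨hx₀, hfx⟩ : x₀ ∈ E)) (Set.notMem_empty x₀)
  have h2 : f (f x₀) ∈ C := by
    by_contra hffx
    exact absurd (hEempty ▸ (⟨h1, hffx⟩ : f x₀ ∈ E)) (Set.notMem_empty (f x₀))
  exact h x₀ hx₀ h1 h2
end

section
/- Let X be a connected topological space, C ⊆ X a nonempty connected closed subset, and f : C → X continuous with f(x) ∈ C for every x ∈ ∂C. Then there exists an orbit of length 4: points x_0,...,x_4 with x_i = f(x_{i-1}) and x_{i-1} ∈ C for i = 1,...,4. -/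
open Set Topology

theorem dvt_orbit_four
    {X : Type*} [TopologicalSpace X] [ConnectedSpace X]
    (C : Set X) (hCconn : IsConnected C)
    (hC : IsClosed C) (f : X → X) (hf : ContinuousOn f C)
    (hbdr : ∀ x ∈ frontier C, f x ∈ C) :
    ∃ x₀, x₀ ∈ C ∧ f x₀ ∈ C ∧ f (f x₀) ∈ C ∧ f (f (f x₀)) ∈ C := by
  by_cases hinv : ∀ x ∈ C, f x ∈ C
  · obtain ⟨z, hz⟩ := hCconn.nonempty
    exact ⟨z, hz, hinv z hz, hinv _ (hinv z hz), hinv _ (hinv _ (hinv z hz))⟩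
  push_neg at hinv
  obtain ⟨u, huC, hu⟩ := hinv
  set U : Set X := {x | x ∈ C ∧ f x ∉ C} with hUdef
  have hUC : U ⊆ C := fun x hx => hx.1
  have hclUC : closure U ⊆ C := by
    rw [← hC.closure_eq]; exact closure_mono hUC
  have hUint : U ⊆ interior C := by
    intro x hx
    by_contra h
    have hxf : x ∈ frontier C := by
      rw [frontier, hC.closure_eq]; exact ⟨hx.1, h⟩
    exact hx.2 (hbdr x hxf)
  have hUopen : IsOpen U := by
    rw [isOpen_iff_mem_nhds]
    intro x hx
    have hxC : C ∈ 𝓝 x := mem_interior_iff_mem_nhds.mp (hUint hx)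
    have hca : ContinuousAt f x := (hf x hx.1).continuousAt hxC
    have h1 : f ⁻¹' Cᶜ ∈ 𝓝 x := hca.preimage_mem_nhds (hC.isOpen_compl.mem_nhds hx.2)
    filter_upwards [hxC, h1] with y hy1 hy2
    exact ⟨hy1, hy2⟩
  -- points on the frontier of U map into the frontier of C
  have claimA : ∀ x ∈ closure U \ U, x ∈ C ∧ f x ∈ frontier C := by
    rintro x ⟨hxcl, hxU⟩
    have hxC : x ∈ C := hclUC hxcl
    have hfxC : f x ∈ C := by
      by_contra h; exact hxU ⟨hxC, h⟩
    have h1 : f x ∈ closure (f '' U) :=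
      ((hf x hxC).mono hUC).mem_closure_image hxcl
    have h2 : f x ∈ closure Cᶜ :=
      closure_mono (image_subset_iff.mpr fun y hy => hy.2) h1
    refine ⟨hxC, ?_⟩
    rw [frontier_eq_closure_inter_closure, hC.closure_eq]
    exact ⟨hfxC, h2⟩
  have hUne : U.Nonempty := ⟨u, huC, hu⟩
  have hfr : (closure U \ U).Nonempty := by
    by_contra h
    rw [not_nonempty_iff_eq_empty, diff_eq_empty] at h
    have hclopen : IsClopen U := ⟨closure_subset_iff_isClosed.mp h, hUopen⟩
    have huniv : U = univ := hclopen.eq_univ hUne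
    have : f u ∈ U := huniv ▸ mem_univ (f u)
    exact hu this.1
  set P : Set X := C ∩ f ⁻¹' (closure U) with hPdef
  have hPclosed : IsClosed P := hf.preimage_isClosed_of_isClosed hC isClosed_closure
  rcases P.eq_empty_or_nonempty with hP | hPne
  · -- P empty : the set {x ∈ C | f x ∈ C} is forward invariant
    have hstep : ∀ x, x ∈ C → f x ∈ C → f (f x) ∈ C := by
      intro x hx hfx
      by_contra h
      have hxP : x ∈ P := ⟨hx, subset_closure (⟨hfx, h⟩ : f x ∈ U)⟩
      rw [hP] at hxP
      exact hxP
    obtain ⟨d, hd⟩ := hfr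
    obtain ⟨hdC, hfd⟩ := claimA d hd
    have h1 : f d ∈ C := hC.frontier_subset hfd
    exact ⟨d, hdC, h1, hstep d hdC h1, hstep (f d) h1 (hstep d hdC h1)⟩
  · -- P nonempty: use connectedness of C to find a point of P in the closure of C \ P
    have hCPne : (C \ P).Nonempty := by
      by_contra h
      rw [not_nonempty_iff_eq_empty, diff_eq_empty] at h
      exact hu (hclUC (h huC).2)
    have hconn := hCconn.isPreconnected
    rw [isPreconnected_closed_iff] at hconn
    obtain ⟨x₀, hx₀C, hx₀P, hx₀cl⟩ :=
      hconn P (closure (C \ P)) hPclosed isClosed_closure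
        (fun x hx => (em (x ∈ P)).imp id fun h => subset_closure ⟨hx, h⟩)
        ⟨hPne.choose, hPne.choose_spec.1, hPne.choose_spec⟩
        ⟨hCPne.choose, hCPne.choose_spec.1, subset_closure hCPne.choose_spec⟩
    have hfx₀cl : f x₀ ∈ closure U := hx₀P.2
    have hfx₀not : f x₀ ∉ U := by
      have h1 : f x₀ ∈ closure (f '' (C \ P)) :=
        ((hf x₀ hx₀C).mono diff_subset).mem_closure_image hx₀cl
      have h2 : f '' (C \ P) ⊆ (closure U)ᶜ := by
        rintro y ⟨z, hz, rfl⟩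
        intro hyc
        exact hz.2 ⟨hz.1, hyc⟩
      have h3 : f x₀ ∈ closure ((closure U)ᶜ) := closure_mono h2 h1
      rw [closure_compl] at h3
      intro hmem
      exact h3 (interior_maximal subset_closure hUopen hmem)
    obtain ⟨hfx₀C, hffx₀⟩ := claimA (f x₀) ⟨hfx₀cl, hfx₀not⟩
    exact ⟨x₀, hx₀C, hfx₀C, hC.frontier_subset hffx₀, hbdr _ hffx₀⟩
end

section
/- Let X be a topological space, C ⊆ X a nonempty closed subset, and f : C → X continuous with f(∂C) ⊆ C. Suppose ∂C is a retract of X \ Int(C) and C has the fixed point property (every continuous self-map of C has a fixed point). Then f has a fixed point: there exists x ∈ C with f(x) = x. -/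
theorem dvt_fixed_point_of_retract
    {X : Type*} [TopologicalSpace X] (C : Set X) (hCne : C.Nonempty)
    (hC : IsClosed C) (f : X → X) (hf : ContinuousOn f C)
    (hbdr : ∀ x ∈ frontier C, f x ∈ C)
    (r : X → X) (hr : ContinuousOn r (interior C)ᶜ)
    (hrmaps : ∀ x ∈ (interior C)ᶜ, r x ∈ frontier C)
    (hrid : ∀ x ∈ frontier C, r x = x)
    (hfpp : ∀ g : X → X, ContinuousOn g C → (∀ x ∈ C, g x ∈ C) →
      ∃ x ∈ C, g x = x) :
    ∃ x ∈ C, f x = x := by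
  classical
  set g : X → X := fun x => if f x ∈ C then f x else r (f x) with hg
  set A : Set X := C ∩ f ⁻¹' C with hA
  set B : Set X := C ∩ f ⁻¹' (interior C)ᶜ with hB
  have hAcl : IsClosed A := hf.preimage_isClosed_of_isClosed hC hC
  have hBcl : IsClosed B :=
    hf.preimage_isClosed_of_isClosed hC (isOpen_interior.isClosed_compl)
  have hcover : C = A ∪ B := by
    ext x
    constructor
    · intro hx
      by_cases h : f x ∈ interior C
      · exact Or.inl ⟨hx, show f x ∈ C from interior_subset h⟩
      · exact Or.inr ⟨hx, h⟩
    · rintro (⟨hx, _⟩ | ⟨hx, _⟩) <;> exact hx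
  -- on A, g = f
  have hgA : ∀ x ∈ A, g x = f x := by
    rintro x ⟨_, hx⟩
    exact if_pos hx
  -- on B, g = r ∘ f
  have hgB : ∀ x ∈ B, g x = r (f x) := by
    rintro x ⟨_, hx⟩
    by_cases h : f x ∈ C
    · have hfr : f x ∈ frontier C := by
        rw [hC.frontier_eq]
        exact ⟨h, hx⟩
      simp [hg, h, hrid _ hfr]
    · simp [hg, h]
  have hcontA : ContinuousOn g A := by
    refine ContinuousOn.congr ?_ hgA
    exact hf.mono (by intro x hx; exact hx.1)
  have hcontB : ContinuousOn g B := by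
    refine ContinuousOn.congr ?_ hgB
    exact ContinuousOn.comp hr (hf.mono (fun x hx => hx.1)) (fun x hx => hx.2)
  have hcont : ContinuousOn g C := by
    rw [hcover]
    intro x hx
    have h1 : ContinuousWithinAt g A x := by
      by_cases h : x ∈ A
      · exact hcontA x h
      · exact continuousWithinAt_of_notMem_closure (by rwa [hAcl.closure_eq])
    have h2 : ContinuousWithinAt g B x := by
      by_cases h : x ∈ B
      · exact hcontB x h
      · exact continuousWithinAt_of_notMem_closure (by rwa [hBcl.closure_eq])
    exact h1.union h2
  have hmaps : ∀ x ∈ C, g x ∈ C := by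
    intro x hx
    by_cases h : f x ∈ C
    · simp only [hg, if_pos h]; exact h
    · have hnotint : f x ∈ (interior C)ᶜ := fun hi => h (interior_subset hi)
      have := hrmaps _ hnotint
      simp only [hg, if_neg h]
      exact (frontier_subset_closure.trans hC.closure_subset) (hrmaps _ hnotint)
  obtain ⟨x, hxC, hgx⟩ := hfpp g hcont hmaps
  by_cases h : f x ∈ C
  · exact ⟨x, hxC, by rw [show f x = g x from (if_pos h).symm]; exact hgx⟩
  · exfalso
    have hnotint : f x ∈ (interior C)ᶜ := fun hi => h (interior_subset hi)
    have hxfr : x ∈ frontier C := by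
      have : g x ∈ frontier C := by
        simp only [hg, if_neg h]
        exact hrmaps _ hnotint
      rwa [hgx] at this
    exact h (hbdr x hxfr)
end

section
/- Let X be a topological space, C ⊆ X closed, and f : C → 𝒫*(X) a set-valued map that is upper semicontinuous (for every open U ⊆ X, {x ∈ C : f(x) ⊆ U} is open in C) and satisfies f(x) ∩ C ≠ ∅ for every x ∈ ∂C. Define C_0 = X, C_{n+1} = {x ∈ C : f(x) ∩ C_n ≠ ∅}, and A_n = C_n \ C_{n+1}. Then A_0 and A_1 are open subsets of X. -/
theorem dvt_corr_A0_A1_open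
    {X : Type*} [TopologicalSpace X] (C : Set X) (hCne : C.Nonempty)
    (hC : IsClosed C) (F : X → Set X)
    (hne : ∀ x ∈ C, (F x).Nonempty)
    (husc : ∀ U : Set X, IsOpen U → IsOpen {x : C | F (x : X) ⊆ U})
    (hbdr : ∀ x ∈ frontier C, (F x ∩ C).Nonempty)
    (Cn : ℕ → Set X) (h0 : Cn 0 = Set.univ)
    (hsucc : ∀ n, Cn (n + 1) = {x ∈ C | (F x ∩ Cn n).Nonempty}) :
    IsOpen (Cn 0 \ Cn 1) ∧ IsOpen (Cn 1 \ Cn 2) := by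
  have hC1 : Cn 1 = C := by
    rw [hsucc 0, h0]
    ext x
    simp only [Set.mem_setOf_eq, Set.inter_univ]
    exact ⟨fun h => h.1, fun h => ⟨h, hne x h⟩⟩
  constructor
  · rw [h0, hC1]
    simpa [Set.diff_eq] using hC.isOpen_compl
  · have hA1 : Cn 1 \ Cn 2 = {x ∈ C | F x ⊆ Cᶜ} := by
      rw [hC1, hsucc 1, hC1]
      ext x
      simp only [Set.mem_diff, Set.mem_setOf_eq, Set.subset_compl_iff_disjoint_right,
        Set.disjoint_iff_inter_eq_empty, ← Set.not_nonempty_iff_eq_empty]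
      tauto
    rw [hA1]
    -- get an open U in X inducing the open set from husc
    obtain ⟨U, hU, hUeq⟩ := isOpen_induced_iff.mp (husc Cᶜ hC.isOpen_compl)
    have hSint : {x ∈ C | F x ⊆ Cᶜ} ⊆ interior C := by
      intro x ⟨hxC, hxF⟩
      by_contra hxi
      have hxfr : x ∈ frontier C := by
        rw [frontier, Set.mem_diff]
        exact ⟨subset_closure hxC, hxi⟩
      obtain ⟨y, hyF, hyC⟩ := hbdr x hxfr
      exact hxF hyF hyC
    have hEq : {x ∈ C | F x ⊆ Cᶜ} = U ∩ interior C := by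
      ext x
      constructor
      · intro hx
        refine ⟨?_, hSint hx⟩
        have : (⟨x, hx.1⟩ : C) ∈ {x : C | F (x : X) ⊆ Cᶜ} := hx.2
        rw [← hUeq] at this
        exact this
      · rintro ⟨hxU, hxi⟩
        have hxC : x ∈ C := interior_subset hxi
        have : (⟨x, hxC⟩ : C) ∈ Subtype.val ⁻¹' U := hxU
        rw [hUeq] at this
        exact ⟨hxC, this⟩
    rw [hEq]
    exact hU.inter isOpen_interior
end

section
/- Let X be a topological space, C ⊆ X closed, and f : C → 𝒫*(X) an upper semicontinuous set-valued map with connected values such that f(x) ∩ C ≠ ∅ for every x ∈ ∂C. With C_n defined by C_0 = X and C_{n+1} = {x ∈ C : f(x) ∩ C_n ≠ ∅}, the boundary of C_2 relative to C_1 is contained in C_3. -/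
/-- Upper semicontinuity gives an open neighborhood in `X` on which `F ⊆ U` holds over `C`. -/
lemma usc_nbhd {X : Type*} [TopologicalSpace X] {C : Set X} {F : X → Set X}
    (husc : ∀ U : Set X, IsOpen U → IsOpen {x : C | F (x : X) ⊆ U})
    {U : Set X} (hU : IsOpen U) {x : X} (hx : x ∈ C) (hFx : F x ⊆ U) :
    ∃ V : Set X, IsOpen V ∧ x ∈ V ∧ ∀ z ∈ V ∩ C, F z ⊆ U := by
  have h := husc U hU
  rw [isOpen_induced_iff] at h
  obtain ⟨W, hW, hWeq⟩ := h
  have hxW : x ∈ W := by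
    have : (⟨x, hx⟩ : C) ∈ {x : C | F (x : X) ⊆ U} := hFx
    rw [← hWeq] at this; exact this
  refine ⟨W, hW, hxW, fun z hz => ?_⟩
  have : (⟨z, hz.2⟩ : C) ∈ Subtype.val ⁻¹' W := hz.1
  rw [hWeq] at this; exact this

theorem dvt_corr_relFrontier_C2_subset_C3
    {X : Type*} [TopologicalSpace X] (C : Set X) (hCne : C.Nonempty)
    (hC : IsClosed C) (F : X → Set X)
    (hne : ∀ x ∈ C, (F x).Nonempty)
    (hconn : ∀ x ∈ C, IsPreconnected (F x))
    (husc : ∀ U : Set X, IsOpen U → IsOpen {x : C | F (x : X) ⊆ U})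
    (hbdr : ∀ x ∈ frontier C, (F x ∩ C).Nonempty)
    (Cn : ℕ → Set X) (h0 : Cn 0 = Set.univ)
    (hsucc : ∀ n, Cn (n + 1) = {x ∈ C | (F x ∩ Cn n).Nonempty}) :
    relFrontier (Cn 1) (Cn 2) ⊆ Cn 3 := by
  have h1 : Cn 1 = C := by
    rw [hsucc, h0]
    ext y
    simp only [Set.inter_univ, Set.mem_setOf_eq]
    exact ⟨fun h => h.1, fun h => ⟨h, hne y h⟩⟩
  have hC2 : Cn 2 = {y ∈ C | (F y ∩ C).Nonempty} := by rw [hsucc, h1]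
  intro x hx
  obtain ⟨⟨hxC, hxcl2⟩, hxcl⟩ := hx
  rw [h1] at hxC hxcl
  rw [hsucc 2]
  refine ⟨hxC, ?_⟩
  by_contra hF
  rw [Set.not_nonempty_iff_eq_empty] at hF
  -- Step 1 : F x ∩ C is nonempty
  have hFC : (F x ∩ C).Nonempty := by
    by_contra h
    rw [Set.not_nonempty_iff_eq_empty, ← Set.disjoint_iff_inter_eq_empty,
      Set.disjoint_right] at h
    have hsub : F x ⊆ Cᶜ := fun y hy hyC => h hyC hy
    obtain ⟨V, hVo, hxV, hV⟩ := usc_nbhd husc hC.isOpen_compl hxC hsub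
    obtain ⟨y, hyV, hy2⟩ := mem_closure_iff.mp hxcl2 V hVo hxV
    rw [hC2] at hy2
    obtain ⟨hyC, z, hzF, hzC⟩ := hy2
    exact hV y ⟨hyV, hyC⟩ hzF hzC
  -- Step 2 : F x ∩ C ⊆ interior C
  have hint : F x ∩ C ⊆ interior C := by
    rintro y ⟨hyF, hyC⟩
    by_contra hyi
    have hyfr : y ∈ frontier C := ⟨subset_closure hyC, hyi⟩
    obtain ⟨z, hzF, hzC⟩ := hbdr y hyfr
    have : y ∈ F x ∩ Cn 2 := ⟨hyF, by rw [hC2]; exact ⟨hyC, z, hzF, hzC⟩⟩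
    rw [hF] at this; exact this
  by_cases hcc : (F x ∩ Cᶜ).Nonempty
  · -- connectedness contradiction
    have hcover : F x ⊆ interior C ∪ Cᶜ := by
      intro y hy
      by_cases hyC : y ∈ C
      · exact Or.inl (hint ⟨hy, hyC⟩)
      · exact Or.inr hyC
    obtain ⟨y, hy, hy1, hy2⟩ := hconn x hxC (interior C) Cᶜ isOpen_interior
      hC.isOpen_compl hcover
      (hFC.imp fun y hy => ⟨hy.1, hint hy⟩) hcc
    exact hy2 (interior_subset hy1)
  · -- F x ⊆ C, hence F x ⊆ interior C
    rw [Set.not_nonempty_iff_eq_empty, ← Set.disjoint_iff_inter_eq_empty,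
      Set.disjoint_right] at hcc
    have hsub : F x ⊆ interior C := fun y hy =>
      hint ⟨hy, by by_contra h; exact hcc h hy⟩
    obtain ⟨V, hVo, hxV, hV⟩ := usc_nbhd husc isOpen_interior hxC hsub
    obtain ⟨z, hzV, hz⟩ := mem_closure_iff.mp hxcl V hVo hxV
    obtain ⟨hzC, hz2⟩ := hz
    apply hz2
    rw [hC2]
    obtain ⟨w, hw⟩ := hne z hzC
    exact ⟨hzC, w, hw, interior_subset (hV z ⟨hzV, hzC⟩ hw)⟩
end

section
/- Let X be a topological space, C ⊆ X a closed subset, and f : C → 𝒫*(X) an upper semicontinuous set-valued map with connected values. If A ⊆ C is connected, then the image f(A) = ⋃_{x ∈ A} f(x) is connected. -/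
theorem dvt_corr_image_connected
    {X : Type*} [TopologicalSpace X] (C : Set X) (hC : IsClosed C)
    (F : X → Set X)
    (hne : ∀ x ∈ C, (F x).Nonempty)
    (hconn : ∀ x ∈ C, IsPreconnected (F x))
    (husc : ∀ U : Set X, IsOpen U → IsOpen {x : C | F (x : X) ⊆ U})
    (A : Set X) (hAC : A ⊆ C) (hA : IsConnected A) :
    IsConnected (⋃ x ∈ A, F x) := by
  obtain ⟨⟨a, ha⟩, hApre⟩ := hA
  constructor
  · obtain ⟨y, hy⟩ := hne a (hAC ha)
    exact ⟨y, Set.mem_biUnion ha hy⟩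
  rintro u v hu hv hsub ⟨y₁, hy₁s, hy₁u⟩ ⟨y₂, hy₂s, hy₂v⟩
  by_contra hempty
  rw [Set.not_nonempty_iff_eq_empty] at hempty
  -- each value lies entirely in u or entirely in v
  have key : ∀ x ∈ A, F x ⊆ u ∨ F x ⊆ v := by
    intro x hx
    have hsubx : F x ⊆ u ∪ v := fun y hy => hsub (Set.mem_biUnion hx hy)
    by_cases hFu : (F x ∩ u).Nonempty
    · by_cases hFv : (F x ∩ v).Nonempty
      · obtain ⟨y, hy⟩ := hconn x (hAC hx) u v hu hv hsubx hFu hFv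
        exact absurd hempty (Set.nonempty_iff_ne_empty.mp
          ⟨y, Set.mem_biUnion hx hy.1, hy.2⟩)
      · left
        intro y hy
        rcases hsubx hy with h | h
        · exact h
        · exact absurd ⟨y, hy, h⟩ hFv
    · right
      intro y hy
      rcases hsubx hy with h | h
      · exact absurd ⟨y, hy, h⟩ hFu
      · exact h
  -- work in the subtype C
  set A' : Set C := Subtype.val ⁻¹' A with hA'
  have himg : Subtype.val '' A' = A := by
    ext x
    constructor
    · rintro ⟨⟨x, hxC⟩, hx, rfl⟩; exact hx
    · intro hx; exact ⟨⟨x, hAC hx⟩, hx, rfl⟩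
  have hA'pre : IsPreconnected A' := by
    have := hApre
    rw [← himg] at this
    exact (Topology.IsInducing.subtypeVal.isPreconnected_image).mp this
  have hU' : IsOpen {x : C | F (x : X) ⊆ u} := husc u hu
  have hV' : IsOpen {x : C | F (x : X) ⊆ v} := husc v hv
  have hcov : A' ⊆ {x : C | F (x : X) ⊆ u} ∪ {x : C | F (x : X) ⊆ v} := by
    rintro ⟨x, hxC⟩ hx
    exact key x hx
  have hAu : (A' ∩ {x : C | F (x : X) ⊆ u}).Nonempty := by
    rw [Set.mem_iUnion₂] at hy₁s
    obtain ⟨x, hx, hy₁⟩ := hy₁s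
    rcases key x hx with h | h
    · exact ⟨⟨x, hAC hx⟩, hx, h⟩
    · exact absurd hempty (Set.nonempty_iff_ne_empty.mp
        ⟨y₁, Set.mem_biUnion hx hy₁, hy₁u, h hy₁⟩)
  have hAv : (A' ∩ {x : C | F (x : X) ⊆ v}).Nonempty := by
    rw [Set.mem_iUnion₂] at hy₂s
    obtain ⟨x, hx, hy₂⟩ := hy₂s
    rcases key x hx with h | h
    · exact absurd hempty (Set.nonempty_iff_ne_empty.mp
        ⟨y₂, Set.mem_biUnion hx hy₂, h hy₂, hy₂v⟩)
    · exact ⟨⟨x, hAC hx⟩, hx, h⟩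
  obtain ⟨⟨x, hxC⟩, hx, hxu, hxv⟩ := hA'pre _ _ hU' hV' hcov hAu hAv
  obtain ⟨y, hy⟩ := hne x hxC
  exact absurd hempty (Set.nonempty_iff_ne_empty.mp
    ⟨y, Set.mem_biUnion hx hy, hxu hy, hxv hy⟩)
end

section
/- Let X be a connected topological space and C ⊆ X a nonempty proper closed subset. Let f : C → 𝒫*(X) be upper semicontinuous with connected values and f(x) ∩ C ≠ ∅ for every x ∈ ∂C. Then there exists a chain x_0, x_1, x_2, x_3 with x_i ∈ f(x_{i-1}) and x_{i-1} ∈ C for i = 1, 2, 3. -/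
theorem dvt_corr_chain_three
    {X : Type*} [TopologicalSpace X] [ConnectedSpace X]
    (C : Set X) (hCne : C.Nonempty) (hCproper : C ≠ Set.univ)
    (hC : IsClosed C) (F : X → Set X)
    (hne : ∀ x ∈ C, (F x).Nonempty)
    (hconn : ∀ x ∈ C, IsPreconnected (F x))
    (husc : ∀ U : Set X, IsOpen U → IsOpen {x : C | F (x : X) ⊆ U})
    (hbdr : ∀ x ∈ frontier C, (F x ∩ C).Nonempty) :
    ∃ x₀ x₁ x₂ x₃, x₀ ∈ C ∧ x₁ ∈ F x₀ ∧ x₁ ∈ C ∧ x₂ ∈ F x₁ ∧ x₂ ∈ C ∧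
      x₃ ∈ F x₂ := by
  by_contra h
  push_neg at h
  -- A : points of C whose image misses C entirely
  set A : Set X := {x | x ∈ C ∧ F x ⊆ Cᶜ} with hA
  have hAsubC : A ⊆ C := fun x hx => hx.1
  have hAfr : ∀ x ∈ frontier C, x ∉ A := by
    intro x hx hxA
    obtain ⟨y, hy⟩ := hbdr x hx
    exact hxA.2 hy.1 hy.2
  -- A is open in X
  have hAopen : IsOpen A := by
    obtain ⟨V, hVopen, hVeq⟩ := isOpen_induced_iff.mp (husc Cᶜ hC.isOpen_compl)
    have hAV : A = V ∩ interior C := by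
      ext x
      constructor
      · rintro ⟨hxC, hxF⟩
        refine ⟨?_, ?_⟩
        · have : (⟨x, hxC⟩ : C) ∈ Subtype.val ⁻¹' V := by
            rw [hVeq]; exact hxF
          exact this
        · have hfr : x ∉ frontier C := fun hfr => hAfr x hfr ⟨hxC, hxF⟩
          by_contra hxi
          exact hfr (hC.frontier_eq ▸ ⟨hxC, hxi⟩)
      · rintro ⟨hxV, hxi⟩
        have hxC : x ∈ C := interior_subset hxi
        have : (⟨x, hxC⟩ : C) ∈ {x : C | F (x : X) ⊆ Cᶜ} := by
          rw [← hVeq]; exact hxV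
        exact ⟨hxC, this⟩
    rw [hAV]; exact hVopen.inter isOpen_interior
  -- key step: any point of C outside A has its whole image inside A
  have hkey : ∀ z ∈ C, z ∉ A → F z ⊆ A := by
    intro z hzC hzA
    have hmeet : (F z ∩ C).Nonempty := by
      by_contra hne'
      exact hzA ⟨hzC, fun y hy hyC => hne' ⟨y, hy, hyC⟩⟩
    have hsub : F z ∩ C ⊆ A := by
      rintro y ⟨hyF, hyC⟩
      refine ⟨hyC, fun w hwF hwC => ?_⟩
      exact h z y w (hne w hwC).choose hzC hyF hyC hwF hwC (hne w hwC).choose_spec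
    have hsuv : F z ⊆ A ∪ Cᶜ := by
      intro y hy
      by_cases hyC : y ∈ C
      · exact Or.inl (hsub ⟨hy, hyC⟩)
      · exact Or.inr hyC
    have hdisj : Disjoint A Cᶜ := Set.disjoint_left.mpr fun x hxA hxc => hxc hxA.1
    obtain ⟨w, hw⟩ := hmeet
    exact (hconn z hzC).subset_left_of_subset_union hAopen hC.isOpen_compl hdisj hsuv
      ⟨w, hw.1, hsub hw⟩
  -- A is closed in X
  have hAclosed : IsClosed A := by
    rw [← closure_subset_iff_isClosed]
    intro z hz
    have hzC : z ∈ C := hC.closure_subset_iff.mpr subset_rfl (closure_mono hAsubC hz)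
    by_contra hzA
    have hFzA : F z ⊆ A := hkey z hzC hzA
    obtain ⟨V, hVopen, hVeq⟩ := isOpen_induced_iff.mp (husc A hAopen)
    have hzV : z ∈ V := by
      have : (⟨z, hzC⟩ : C) ∈ Subtype.val ⁻¹' V := by rw [hVeq]; exact hFzA
      exact this
    obtain ⟨a, haV, haA⟩ := mem_closure_iff.mp hz V hVopen hzV
    have haC : a ∈ C := haA.1
    have hFaA : F a ⊆ A := by
      have : (⟨a, haC⟩ : C) ∈ Subtype.val ⁻¹' V := haV
      rw [hVeq] at this
      exact this
    obtain ⟨b, hb⟩ := hne a haC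
    exact haA.2 hb (hFaA hb).1
  -- conclude: A is clopen, hence empty, hence F of any point of C is empty
  have : A = ∅ ∨ A = Set.univ := isClopen_iff.mp ⟨hAclosed, hAopen⟩
  rcases this with hAe | hAu
  · obtain ⟨x, hx⟩ := hCne
    have hxA : x ∉ A := by rw [hAe]; exact not_false
    obtain ⟨y, hy⟩ := hne x hx
    have : y ∈ A := hkey x hx hxA hy
    rw [hAe] at this
    exact this
  · exact hCproper (Set.eq_univ_of_univ_subset (hAu ▸ hAsubC))
end

section
/- Let X be a connected topological space, C ⊆ X a nonempty connected closed subset, and f : C → 𝒫*(X) upper semicontinuous with connected values and f(x) ∩ C ≠ ∅ for all x ∈ ∂C. Then there exists a chain x_0,...,x_4 with x_i ∈ f(x_{i-1}) and x_{i-1} ∈ C for i = 1,...,4. -/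
theorem dvt_corr_chain_four
    {X : Type*} [TopologicalSpace X] [ConnectedSpace X]
    (C : Set X) (hCconn : IsConnected C)
    (hC : IsClosed C) (F : X → Set X)
    (hne : ∀ x ∈ C, (F x).Nonempty)
    (hconn : ∀ x ∈ C, IsPreconnected (F x))
    (husc : ∀ U : Set X, IsOpen U → IsOpen {x : C | F (x : X) ⊆ U})
    (hbdr : ∀ x ∈ frontier C, (F x ∩ C).Nonempty) :
    ∃ x₀ x₁ x₂ x₃ x₄, x₀ ∈ C ∧ x₁ ∈ F x₀ ∧ x₁ ∈ C ∧ x₂ ∈ F x₁ ∧ x₂ ∈ C ∧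
      x₃ ∈ F x₂ ∧ x₃ ∈ C ∧ x₄ ∈ F x₃ := by
  classical
  -- upper semicontinuity, reformulated with an open set of X
  have husc' : ∀ U : Set X, IsOpen U → ∃ V : Set X, IsOpen V ∧
      ∀ x ∈ C, (x ∈ V ↔ F x ⊆ U) := by
    intro U hU
    obtain ⟨V, hV, hVeq⟩ := isOpen_induced_iff.mp (husc U hU)
    refine ⟨V, hV, fun x hx => ?_⟩
    constructor
    · intro hxV
      have h1 : (⟨x, hx⟩ : C) ∈ (Subtype.val ⁻¹' V : Set C) := hxV
      rw [hVeq] at h1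
      exact h1
    · intro hFx
      have h1 : (⟨x, hx⟩ : C) ∈ {x : C | F (x : X) ⊆ U} := hFx
      rw [← hVeq] at h1
      exact h1
  -- the set of points mapped entirely outside C
  set B : Set X := {x | x ∈ C ∧ F x ⊆ Cᶜ} with hBdef
  have hBsubC : B ⊆ C := fun x hx => hx.1
  have hBint : B ⊆ interior C := by
    intro x hx
    by_cases h : x ∈ interior C
    · exact h
    · exfalso
      have hxf : x ∈ frontier C := by
        rw [hC.frontier_eq]; exact ⟨hx.1, h⟩
      obtain ⟨c, hc1, hc2⟩ := hbdr x hxf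
      exact hx.2 hc1 hc2
  obtain ⟨VB, hVBo, hVB⟩ := husc' Cᶜ hC.isOpen_compl
  have hBopen : IsOpen B := by
    have hBeq : B = interior C ∩ VB := by
      ext x
      constructor
      · intro hx
        exact ⟨hBint hx, (hVB x hx.1).mpr hx.2⟩
      · intro hx
        exact ⟨interior_subset hx.1, (hVB x (interior_subset hx.1)).mp hx.2⟩
    rw [hBeq]
    exact isOpen_interior.inter hVBo
  -- the successive "good" sets
  set A1 : Set X := {x | x ∈ C ∧ (F x ∩ C).Nonempty} with hA1def
  set A2 : Set X := {x | x ∈ C ∧ (F x ∩ A1).Nonempty} with hA2def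
  obtain ⟨VP, hVPo, hVP⟩ := husc' B hBopen
  set P : Set X := {x | x ∈ C ∧ F x ⊆ B} with hPdef
  -- basic disjointness
  have hBA1 : ∀ x, x ∈ B → x ∉ A1 := by
    rintro x hxB ⟨-, c, hcF, hcC⟩
    exact hxB.2 hcF hcC
  have hPA2 : ∀ x, x ∈ P → x ∉ A2 := by
    rintro x hxP ⟨-, c, hcF, hcA1⟩
    exact hBA1 c (hxP.2 hcF) hcA1
  -- trichotomy: each point of C lies in B, P or A2
  have htri : ∀ x ∈ C, x ∈ B ∨ x ∈ P ∨ x ∈ A2 := by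
    intro x hx
    by_cases hA2x : (F x ∩ A1).Nonempty
    · exact Or.inr (Or.inr ⟨hx, hA2x⟩)
    by_cases hCx : (F x ∩ C).Nonempty
    · right; left
      refine ⟨hx, ?_⟩
      have hsub : F x ⊆ B ∪ Cᶜ := by
        intro y hy
        by_cases hyC : y ∈ C
        · left
          refine ⟨hyC, fun z hz => ?_⟩
          by_contra hzC
          exact hA2x ⟨y, hy, hyC, z, hz, Set.not_notMem.mp hzC⟩
        · exact Or.inr hyC
      obtain ⟨c, hcF, hcC⟩ := hCx
      have hcB : c ∈ B := by
        rcases hsub hcF with h | h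
        · exact h
        · exact absurd hcC h
      intro d hdF
      by_contra hdB
      have hdC : d ∈ Cᶜ := by
        rcases hsub hdF with h | h
        · exact absurd h hdB
        · exact h
      obtain ⟨w, -, hwB, hwC⟩ :=
        hconn x hx B Cᶜ hBopen hC.isOpen_compl hsub ⟨c, hcF, hcB⟩ ⟨d, hdF, hdC⟩
      exact hwC (hBsubC hwB)
    · left
      exact ⟨hx, fun y hy hyC => hCx ⟨y, hy, hyC⟩⟩
  -- A1 is nonempty
  have hA1ne : A1.Nonempty := by
    by_cases hfr : (frontier C).Nonempty
    · obtain ⟨z, hz⟩ := hfr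
      have hzC : z ∈ C := by
        rw [hC.frontier_eq] at hz; exact hz.1
      exact ⟨z, hzC, hbdr z hz⟩
    · have hfr' : frontier C = ∅ := Set.not_nonempty_iff_eq_empty.mp hfr
      have hCopen : IsOpen C := by
        have hint : C ⊆ interior C := by
          intro x hx
          by_contra h
          exact (Set.eq_empty_iff_forall_notMem.mp hfr' x)
            (by rw [hC.frontier_eq]; exact ⟨hx, h⟩)
        have : interior C = C := Set.Subset.antisymm interior_subset hint
        rw [← this]; exact isOpen_interior
      have hCuniv : C = Set.univ := (IsClopen.eq_univ ⟨hC, hCopen⟩) hCconn.nonempty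
      obtain ⟨x, hx⟩ := hCconn.nonempty
      obtain ⟨c, hc⟩ := hne x hx
      exact ⟨x, hx, c, hc, by rw [hCuniv]; trivial⟩
  -- points of P are not in the closure of B
  have hPclB : ∀ z ∈ P, z ∉ closure B := by
    intro z hzP hzcl
    obtain ⟨VN, hVNo, hVN⟩ := husc' (interior C) isOpen_interior
    have hzVN : z ∈ VN := (hVN z hzP.1).mpr (fun y hy => hBint (hzP.2 hy))
    obtain ⟨y, hyVN, hyB⟩ := mem_closure_iff.mp hzcl VN hVNo hzVN
    obtain ⟨q, hq⟩ := hne y hyB.1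
    exact hyB.2 hq (interior_subset ((hVN y hyB.1).mp hyVN hq))
  -- A2 is nonempty
  have hA2ne : A2.Nonempty := by
    by_contra hA2e
    have hA2e' : ∀ x, x ∉ A2 := fun x hx => hA2e ⟨x, hx⟩
    have hPne : P.Nonempty := by
      obtain ⟨z, hzA1⟩ := hA1ne
      rcases htri z hzA1.1 with h | h | h
      · exact absurd hzA1 (hBA1 z h)
      · exact ⟨z, h⟩
      · exact absurd h (hA2e' z)
    have hBne : B.Nonempty := by
      by_contra hBe
      obtain ⟨x, hx⟩ := hCconn.nonempty
      rcases htri x hx with h | h | h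
      · exact hBe ⟨x, h⟩
      · obtain ⟨c, hc⟩ := hne x hx
        exact hBe ⟨c, h.2 hc⟩
      · exact hA2e' x h
    obtain ⟨w, hwC, hwVP, hwB⟩ := hCconn.isPreconnected VP B hVPo hBopen
      (by intro x hx
          rcases htri x hx with h | h | h
          · exact Or.inr h
          · exact Or.inl ((hVP x hx).mpr h.2)
          · exact absurd h (hA2e' x))
      (by obtain ⟨p, hp⟩ := hPne
          exact ⟨p, hp.1, (hVP p hp.1).mpr hp.2⟩)
      (by obtain ⟨b, hb⟩ := hBne
          exact ⟨b, hBsubC hb, hb⟩)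
    obtain ⟨q, hq⟩ := hne w hwC
    have hqB : q ∈ B := (hVP w hwC).mp hwVP hq
    exact hwB.2 hq (hBsubC hqB)
  -- the key step: A3 is nonempty
  have hA3ne : ({x | x ∈ C ∧ (F x ∩ A2).Nonempty} : Set X).Nonempty := by
    by_contra hA3e
    have hstar : ∀ x ∈ C, ∀ y, ¬(y ∈ F x ∧ y ∈ A2) := by
      rintro x hx y ⟨hyF, hyA2⟩
      exact hA3e ⟨x, hx, y, hyF, hyA2⟩
    -- P is nonempty
    have hPne : P.Nonempty := by
      obtain ⟨z, hzA2⟩ := hA2ne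
      obtain ⟨c, hcF, hcA1⟩ := hzA2.2
      rcases htri c hcA1.1 with h | h | h
      · exact absurd hcA1 (hBA1 c h)
      · exact ⟨c, h⟩
      · exact absurd ⟨hcF, h⟩ (hstar z hzA2.1 c)
    have hclBsubC : closure B ⊆ C := closure_minimal hBsubC hC
    -- for x ∈ A2, F x does not meet B
    have h7b : ∀ x ∈ A2, ∀ y, ¬(y ∈ F x ∧ y ∈ B) := by
      rintro x hxA2 b ⟨hbF, hbB⟩
      have hkey : ∀ y ∈ F x, y ∈ closure B → y ∈ B := by
        intro y hyF hycl
        rcases htri y (hclBsubC hycl) with h | h | h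
        · exact h
        · exact absurd hycl (hPclB y h)
        · exact absurd ⟨hyF, h⟩ (hstar x hxA2.1 y)
      have hFsub : F x ⊆ B := by
        intro d hdF
        by_contra hdB
        have hdcl : d ∈ (closure B)ᶜ := fun h => hdB (hkey d hdF h)
        have hcov : F x ⊆ B ∪ (closure B)ᶜ := by
          intro y hy
          by_cases h : y ∈ closure B
          · exact Or.inl (hkey y hy h)
          · exact Or.inr h
        obtain ⟨w, -, hwB, hwcl⟩ := hconn x hxA2.1 B (closure B)ᶜ hBopen
          isClosed_closure.isOpen_compl hcov ⟨b, hbF, hbB⟩ ⟨d, hdF, hdcl⟩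
        exact hwcl (subset_closure hwB)
      exact hPA2 x ⟨hxA2.1, hFsub⟩ hxA2
    -- for x ∈ A2, F x avoids the closure of B
    have h7c : ∀ x ∈ A2, F x ⊆ (closure B)ᶜ := by
      intro x hxA2 y hyF
      intro hycl
      rcases htri y (hclBsubC hycl) with h | h | h
      · exact h7b x hxA2 y ⟨hyF, h⟩
      · exact hPclB y h hycl
      · exact hstar x hxA2.1 y ⟨hyF, h⟩
    -- final separation of C into P and B ∪ A2
    obtain ⟨VN, hVNo, hVN⟩ := husc' (closure B)ᶜ isClosed_closure.isOpen_compl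
    obtain ⟨w, hwC, hwVP, hwW⟩ := hCconn.isPreconnected VP (B ∪ VN) hVPo
      (hBopen.union hVNo)
      (by intro x hx
          rcases htri x hx with h | h | h
          · exact Or.inr (Or.inl h)
          · exact Or.inl ((hVP x hx).mpr h.2)
          · exact Or.inr (Or.inr ((hVN x hx).mpr (h7c x h))))
      (by obtain ⟨p, hp⟩ := hPne
          exact ⟨p, hp.1, (hVP p hp.1).mpr hp.2⟩)
      (by obtain ⟨a, ha⟩ := hA2ne
          exact ⟨a, ha.1, Or.inr ((hVN a ha.1).mpr (h7c a ha))⟩)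
    have hwP : F w ⊆ B := (hVP w hwC).mp hwVP
    obtain ⟨q, hq⟩ := hne w hwC
    rcases hwW with hwB | hwVN
    · exact hwB.2 hq (hBsubC (hwP hq))
    · exact (hVN w hwC).mp hwVN hq (subset_closure (hwP hq))
  -- extract the chain
  obtain ⟨x0, hx0C, x1, hx1F, hx1A2⟩ := hA3ne
  obtain ⟨x2, hx2F, hx2A1⟩ := hx1A2.2
  obtain ⟨x3, hx3F, hx3C⟩ := hx2A1.2
  obtain ⟨x4, hx4F⟩ := hne x3 hx3C
  exact ⟨x0, x1, x2, x3, x4, hx0C, hx1F, hx1A2.1, hx2F, hx2A1.1, hx3F, hx3C, hx4F⟩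
end

section
/- Let X be the unit circle S¹, let C be the closed arc of angles [2π/5, 8π/5] (three fifths of the circle), and let f : C → X be the rotation by angle 4π/5. Then f is continuous, f maps ∂C into C, and the maximal length of an orbit (a sequence x_0,...,x_n with x_i = f(x_{i-1}) and x_{i-1} ∈ C) equals 4. -/
open Real

/-- The arc of the circle consisting of angles in `[2π/5, 8π/5]`. -/
noncomputable def arcC : Set Circle :=
  {z : Circle | ∃ θ ∈ Set.Icc (2 * π / 5) (8 * π / 5), z = Circle.exp θ}

/-- The rotation of the circle by the angle `4π/5`. -/
noncomputable def rot (z : Circle) : Circle := Circle.exp (4 * π / 5) * z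

lemma mem_arc {θ : ℝ} (h1 : 2 * π / 5 ≤ θ) (h2 : θ ≤ 8 * π / 5) :
    Circle.exp θ ∈ arcC := ⟨θ, ⟨h1, h2⟩, rfl⟩

lemma not_mem_arc {ψ : ℝ} (h1 : 8 * π / 5 < ψ) (h2 : ψ < 12 * π / 5) :
    Circle.exp ψ ∉ arcC := by
  rintro ⟨φ, ⟨hφ1, hφ2⟩, heq⟩
  obtain ⟨m, hm⟩ := Circle.exp_eq_exp.mp heq
  have hπ := Real.pi_pos
  have hm0 : (0 : ℝ) < m := by nlinarith
  have hm1 : (1 : ℤ) ≤ m := by exact_mod_cast hm0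
  have : (1 : ℝ) ≤ (m : ℝ) := by exact_mod_cast hm1
  nlinarith

lemma iter_rot (i : ℕ) (z : Circle) :
    rot^[i] z = Circle.exp (4 * π / 5 * i) * z := by
  induction i with
  | zero => simp
  | succ n ih =>
    rw [Function.iterate_succ_apply', ih, rot, ← mul_assoc, ← Circle.exp_add]
    congr 2
    push_cast
    ring

theorem circle_example_iter_eq_four :
    Continuous rot ∧
    (∀ z ∈ frontier arcC, rot z ∈ arcC) ∧
    (∃ x₀ : Circle, ∀ i < 4, rot^[i] x₀ ∈ arcC) ∧
    ¬ (∃ x₀ : Circle, ∀ i < 5, rot^[i] x₀ ∈ arcC) := by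
  have hπ := Real.pi_pos
  refine ⟨continuous_const.mul continuous_id, ?_, ?_, ?_⟩
  · -- frontier
    have himg : arcC = Circle.exp '' Set.Icc (2 * π / 5) (8 * π / 5) := by
      ext z
      constructor
      · rintro ⟨θ, hθ, rfl⟩; exact ⟨θ, hθ, rfl⟩
      · rintro ⟨θ, hθ, rfl⟩; exact ⟨θ, hθ, rfl⟩
    have hclosed : IsClosed arcC := by
      rw [himg]
      exact (isCompact_Icc.image Circle.exp.continuous).isClosed
    have hopen : IsOpen (Circle.exp '' Set.Ioo (2 * π / 5) (8 * π / 5)) :=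
      isLocalHomeomorph_circleExp.isOpenMap _ isOpen_Ioo
    have hsub : Circle.exp '' Set.Ioo (2 * π / 5) (8 * π / 5) ⊆ interior arcC := by
      apply interior_maximal _ hopen
      rintro z ⟨θ, hθ, rfl⟩
      exact mem_arc hθ.1.le hθ.2.le
    intro z hz
    have hz1 : z ∈ arcC := hclosed.closure_eq ▸ hz.1
    have hz2 : z ∉ Circle.exp '' Set.Ioo (2 * π / 5) (8 * π / 5) :=
      fun h => hz.2 (hsub h)
    obtain ⟨θ, ⟨hθ1, hθ2⟩, rfl⟩ := hz1
    have : θ = 2 * π / 5 ∨ θ = 8 * π / 5 := by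
      rcases lt_or_eq_of_le hθ1 with h1 | h1
      · rcases lt_or_eq_of_le hθ2 with h2 | h2
        · exact absurd ⟨θ, ⟨h1, h2⟩, rfl⟩ hz2
        · exact Or.inr h2
      · exact Or.inl h1.symm
    rcases this with rfl | rfl
    · rw [rot, ← Circle.exp_add]
      exact mem_arc (by linarith) (by linarith)
    · rw [rot, ← Circle.exp_add]
      have : Circle.exp (4 * π / 5 + 8 * π / 5) = Circle.exp (2 * π / 5) :=
        Circle.exp_eq_exp.mpr ⟨1, by push_cast; ring⟩
      rw [this]
      exact mem_arc le_rfl (by linarith)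
  · -- orbit of length 4
    refine ⟨Circle.exp (4 * π / 5), ?_⟩
    intro i hi
    rw [iter_rot, ← Circle.exp_add]
    interval_cases i
    · exact mem_arc (by push_cast; linarith) (by push_cast; linarith)
    · exact mem_arc (by push_cast; linarith) (by push_cast; linarith)
    · have : Circle.exp (4 * π / 5 * (2 : ℕ) + 4 * π / 5) = Circle.exp (2 * π / 5) :=
        Circle.exp_eq_exp.mpr ⟨1, by push_cast; ring⟩
      rw [this]; exact mem_arc le_rfl (by linarith)
    · have : Circle.exp (4 * π / 5 * (3 : ℕ) + 4 * π / 5) = Circle.exp (6 * π / 5) :=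
        Circle.exp_eq_exp.mpr ⟨1, by push_cast; ring⟩
      rw [this]; exact mem_arc (by linarith) (by linarith)
  · -- no orbit of length 5
    rintro ⟨x₀, h⟩
    obtain ⟨θ, ⟨hθ1, hθ2⟩, rfl⟩ := h 0 (by norm_num)
    rcases lt_or_ge θ (4 * π / 5) with hc | hc
    · -- i = 2, ψ = θ + 8π/5
      have h2 := h 2 (by norm_num)
      rw [iter_rot, ← Circle.exp_add] at h2
      have heq : Circle.exp (4 * π / 5 * (2 : ℕ) + θ) = Circle.exp (θ + 8 * π / 5) :=
        Circle.exp_eq_exp.mpr ⟨0, by push_cast; ring⟩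
      rw [heq] at h2
      exact not_mem_arc (by linarith) (by linarith) h2
    · rcases lt_or_ge θ (6 * π / 5) with hc2 | hc2
      · -- i = 4, ψ = θ + 6π/5
        have h4 := h 4 (by norm_num)
        rw [iter_rot, ← Circle.exp_add] at h4
        have heq : Circle.exp (4 * π / 5 * (4 : ℕ) + θ) = Circle.exp (θ + 6 * π / 5) :=
          Circle.exp_eq_exp.mpr ⟨1, by push_cast; ring⟩
        rw [heq] at h4
        exact not_mem_arc (by linarith) (by linarith) h4
      · rcases lt_or_ge θ (8 * π / 5) with hc3 | hc3
        · -- i = 1, ψ = θ + 4π/5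
          have h1 := h 1 (by norm_num)
          rw [iter_rot, ← Circle.exp_add] at h1
          have heq : Circle.exp (4 * π / 5 * (1 : ℕ) + θ) = Circle.exp (θ + 4 * π / 5) :=
            Circle.exp_eq_exp.mpr ⟨0, by push_cast; ring⟩
          rw [heq] at h1
          exact not_mem_arc (by linarith) (by linarith) h1
        · -- θ = 8π/5, i = 3, ψ = θ + 2π/5
          have h3 := h 3 (by norm_num)
          rw [iter_rot, ← Circle.exp_add] at h3
          have heq : Circle.exp (4 * π / 5 * (3 : ℕ) + θ) = Circle.exp (θ + 2 * π / 5) :=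
            Circle.exp_eq_exp.mpr ⟨1, by push_cast; ring⟩
          rw [heq] at h3
          exact not_mem_arc (by linarith) (by linarith) h3
end
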